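/- Deterministic form of Theorem 2(a) (prediction error on the estimated design): let k ≥ 1, n ≥ 1, κ > 0, ε ≥ 0, C₃ ≥ 0, δ_∞ ≥ 0, λ ≥ 0, δ ≥ 0; let Z and U be n×k real matrices with |U_{ij}| ≤ δ_∞ for all entries, and let ν_max be the largest eigenvalue of D = (1/n)ZᵀZ. Let L : ℝ^k → ℝ be differentiable and L̂ : ℝ^k → ℝ arbitrary, and let β ∈ ℝ^k. Assume: for all Δ ∈ ℝ^k, (1/n)(L(β + Δ) − L(β) − ⟨∇L(β), Δ⟩) ≥ (κ/2)‖Δ‖₂²; ‖(1/n)∇L(β)‖₂ ≤ ε; |(L̂(β̂) − L(β̂)) − (L̂(β) − L(β))| ≤ C₃·n·δ_∞·‖β̂ − β‖₂; and β̂ is a global minimizer of b ↦ L̂(b) + λ√k‖b‖₂ + (δ/2)‖b‖₂². Then (1/n)‖(Z + U)(β̂ − β)‖₂² ≤ 2(ν_max + k·δ_∞²)·(4/κ²)·(ε + C₃·δ_∞ + λ√k/n + δ·‖β‖₂/n)². -/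

import Mathlib

open Matrix
open scoped RealInnerProductSpace

lemma euc_norm_symm_sq {m : ℕ} (w : Fin m → ℝ) :
    ‖(EuclideanSpace.equiv (Fin m) ℝ).symm w‖ ^ 2 = w ⬝ᵥ w := by
  rw [← real_inner_self_eq_norm_sq]
  simp only [PiLp.inner_apply, RCLike.inner_apply, conj_trivial, dotProduct]
  exact Finset.sum_congr rfl (fun i _ => mul_comm _ _)

lemma euc_norm_sq {m : ℕ} (v : EuclideanSpace ℝ (Fin m)) :
    ‖v‖ ^ 2 = v ⬝ᵥ v := by
  rw [← real_inner_self_eq_norm_sq]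
  simp only [PiLp.inner_apply, RCLike.inner_apply, conj_trivial, dotProduct]

lemma quad_eq {n k : ℕ} (Z : Matrix (Fin n) (Fin k) ℝ) (v : Fin k → ℝ) (c : ℝ) :
    v ⬝ᵥ ((c • (Zᵀ * Z)).mulVec v) = c * ((Z.mulVec v) ⬝ᵥ (Z.mulVec v)) := by
  rw [Matrix.smul_mulVec, dotProduct_smul, smul_eq_mul, ← Matrix.mulVec_mulVec,
    Matrix.dotProduct_mulVec, Matrix.vecMul_transpose]

lemma aux_sq_bound (d e c : ℝ) (hc : 0 < c) (he : 0 ≤ e) (hd : 0 ≤ d)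
    (h : c / 2 * d ^ 2 ≤ e * d) : d ^ 2 ≤ 4 / c ^ 2 * e ^ 2 := by
  have hcd : c * d ≤ 2 * e := by
    rcases hd.eq_or_lt with h0 | h0
    · nlinarith
    · have h' : (c * d) * d ≤ (2 * e) * d := by nlinarith
      exact le_of_mul_le_mul_right h' h0
  have hcd0 : 0 ≤ c * d := by positivity
  have hsq : (c * d) ^ 2 ≤ (2 * e) ^ 2 := by nlinarith
  have hc2 : 0 < c ^ 2 := by positivity
  rw [div_mul_eq_mul_div, le_div_iff₀ hc2]
  nlinarith

set_option maxHeartbeats 1600000 in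
/-- Deterministic form of Theorem 2(a): prediction error on the estimated design
`Ẑ = Z + U` for the ridge-stabilized group lasso. -/
theorem theorem2a_deterministic {k n : ℕ} (hk : 1 ≤ k) (hn : 1 ≤ n)
    (κ ε C₃ δinf lam δ : ℝ)
    (hκ : 0 < κ) (hε : 0 ≤ ε) (hC₃ : 0 ≤ C₃) (hδinf : 0 ≤ δinf)
    (hlam : 0 ≤ lam) (hδ : 0 ≤ δ)
    (Z U : Matrix (Fin n) (Fin k) ℝ) (hU : ∀ i j, |U i j| ≤ δinf)
    (νmax : ℝ)
    (hν : ∀ v : EuclideanSpace ℝ (Fin k),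
      v ⬝ᵥ (((1 / (n : ℝ)) • (Zᵀ * Z)).mulVec v) ≤ νmax * ‖v‖ ^ 2)
    (L : EuclideanSpace ℝ (Fin k) → ℝ) (hL : Differentiable ℝ L)
    (Lhat : EuclideanSpace ℝ (Fin k) → ℝ)
    (β βhat : EuclideanSpace ℝ (Fin k))
    (hRSC : ∀ Δ : EuclideanSpace ℝ (Fin k),
      κ / 2 * ‖Δ‖ ^ 2 ≤ (1 / (n : ℝ)) * (L (β + Δ) - L β - ⟪gradient L β, Δ⟫))
    (hscore : ‖(1 / (n : ℝ)) • gradient L β‖ ≤ ε)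
    (hbias : |(Lhat βhat - L βhat) - (Lhat β - L β)| ≤ C₃ * n * δinf * ‖βhat - β‖)
    (hmin : ∀ b : EuclideanSpace ℝ (Fin k),
      Lhat βhat + lam * Real.sqrt k * ‖βhat‖ + δ / 2 * ‖βhat‖ ^ 2
        ≤ Lhat b + lam * Real.sqrt k * ‖b‖ + δ / 2 * ‖b‖ ^ 2) :
    (1 / (n : ℝ)) *
        ‖(EuclideanSpace.equiv (Fin n) ℝ).symm ((Z + U).mulVec (βhat - β))‖ ^ 2
      ≤ 2 * (νmax + (k : ℝ) * δinf ^ 2) * (4 / κ ^ 2) *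
          (ε + C₃ * δinf + lam * Real.sqrt k / n + δ * ‖β‖ / n) ^ 2 := by
  have hnpos : (0:ℝ) < n := by exact_mod_cast hn
  have hn0 : (n:ℝ) ≠ 0 := ne_of_gt hnpos
  set Δ : EuclideanSpace ℝ (Fin k) := βhat - β with hΔdef
  set E : ℝ := ε + C₃ * δinf + lam * Real.sqrt k / n + δ * ‖β‖ / n with hEdef
  have hE0 : 0 ≤ E := by positivity
  -- Step 1 : ‖Δ‖ ≤ 2/κ * E
  have h1 : ‖β‖ - ‖βhat‖ ≤ ‖Δ‖ := by
    have := norm_sub_norm_le β βhat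
    rwa [norm_sub_rev] at this
  have hsqd : ‖β‖ ^ 2 - ‖βhat‖ ^ 2 ≤ 2 * ‖β‖ * ‖Δ‖ := by
    rcases le_total ‖βhat‖ ‖β‖ with h | h
    · nlinarith [norm_nonneg β, norm_nonneg βhat, norm_nonneg Δ]
    · nlinarith [norm_nonneg β, norm_nonneg βhat, norm_nonneg Δ]
  have hbias' : L βhat - L β ≤ (Lhat βhat - Lhat β) + C₃ * n * δinf * ‖Δ‖ := by
    have h := abs_le.mp hbias
    have h2 := h.1
    linarith
  have hLhat : Lhat βhat - Lhat β ≤ lam * Real.sqrt k * ‖Δ‖ + δ * ‖β‖ * ‖Δ‖ := by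
    have hm := hmin β
    have hlk : (0:ℝ) ≤ lam * Real.sqrt k := by positivity
    nlinarith [mul_le_mul_of_nonneg_left h1 hlk,
      mul_le_mul_of_nonneg_left hsqd (by linarith : (0:ℝ) ≤ δ / 2)]
  have hLdiff : (1 / (n:ℝ)) * (L βhat - L β)
      ≤ (C₃ * δinf + lam * Real.sqrt k / n + δ * ‖β‖ / n) * ‖Δ‖ := by
    have h : L βhat - L β ≤ (lam * Real.sqrt k + δ * ‖β‖ + C₃ * n * δinf) * ‖Δ‖ := by
      nlinarith [hbias', hLhat]
    have h2 : (1 / (n:ℝ)) * (L βhat - L β)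
        ≤ (1 / (n:ℝ)) * ((lam * Real.sqrt k + δ * ‖β‖ + C₃ * n * δinf) * ‖Δ‖) :=
      mul_le_mul_of_nonneg_left h (by positivity)
    have h3 : (1 / (n:ℝ)) * (lam * Real.sqrt k + δ * ‖β‖ + C₃ * n * δinf)
        = C₃ * δinf + lam * Real.sqrt k / n + δ * ‖β‖ / n := by
      field_simp
      ring
    calc (1 / (n:ℝ)) * (L βhat - L β)
        ≤ (1 / (n:ℝ)) * ((lam * Real.sqrt k + δ * ‖β‖ + C₃ * n * δinf) * ‖Δ‖) := h2
      _ = ((1 / (n:ℝ)) * (lam * Real.sqrt k + δ * ‖β‖ + C₃ * n * δinf)) * ‖Δ‖ := by ring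
      _ = (C₃ * δinf + lam * Real.sqrt k / n + δ * ‖β‖ / n) * ‖Δ‖ := by rw [h3]
  have hinner : -((1 / (n:ℝ)) * ⟪gradient L β, Δ⟫) ≤ ε * ‖Δ‖ := by
    have h := abs_real_inner_le_norm ((1 / (n:ℝ)) • gradient L β) Δ
    rw [real_inner_smul_left] at h
    have h2 : ‖(1 / (n:ℝ)) • gradient L β‖ * ‖Δ‖ ≤ ε * ‖Δ‖ :=
      mul_le_mul_of_nonneg_right hscore (norm_nonneg Δ)
    have h3 := neg_abs_le ((1 / (n:ℝ)) * ⟪gradient L β, Δ⟫)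
    linarith
  have hRSCΔ := hRSC Δ
  have hβΔ : β + Δ = βhat := by simp [hΔdef]
  rw [hβΔ] at hRSCΔ
  have hkey : κ / 2 * ‖Δ‖ ^ 2 ≤ E * ‖Δ‖ := by
    have hexp : (1 / (n:ℝ)) * (L βhat - L β - ⟪gradient L β, Δ⟫)
        = (1 / (n:ℝ)) * (L βhat - L β) + -((1 / (n:ℝ)) * ⟪gradient L β, Δ⟫) := by ring
    rw [hexp] at hRSCΔ
    have hEexp : E * ‖Δ‖
        = ε * ‖Δ‖ + (C₃ * δinf + lam * Real.sqrt k / n + δ * ‖β‖ / n) * ‖Δ‖ := by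
      rw [hEdef]; ring
    linarith
  have hΔsq : ‖Δ‖ ^ 2 ≤ 4 / κ ^ 2 * E ^ 2 :=
    aux_sq_bound ‖Δ‖ E κ hκ hE0 (norm_nonneg Δ) hkey
  -- Step 2 : design bounds
  have hZ : (Z.mulVec Δ) ⬝ᵥ (Z.mulVec Δ) ≤ n * (νmax * ‖Δ‖ ^ 2) := by
    have h := hν Δ
    rw [quad_eq] at h
    have h2 := mul_le_mul_of_nonneg_left h (le_of_lt hnpos)
    calc (Z.mulVec Δ) ⬝ᵥ (Z.mulVec Δ)
        = (n:ℝ) * ((1 / (n:ℝ)) * ((Z.mulVec Δ) ⬝ᵥ (Z.mulVec Δ))) := by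
          field_simp
      _ ≤ n * (νmax * ‖Δ‖ ^ 2) := h2
  have hdotΔ : Δ ⬝ᵥ Δ = ‖Δ‖ ^ 2 := (euc_norm_sq Δ).symm
  have hUrow : ∀ i, (U.mulVec Δ i) ^ 2 ≤ ((k:ℝ) * δinf ^ 2) * ‖Δ‖ ^ 2 := by
    intro i
    have hcs := Finset.sum_mul_sq_le_sq_mul_sq Finset.univ (fun j => U i j) (fun j => Δ j)
    have hU2 : ∑ j : Fin k, (U i j) ^ 2 ≤ (k:ℝ) * δinf ^ 2 := by
      calc ∑ j : Fin k, (U i j) ^ 2 ≤ ∑ j : Fin k, δinf ^ 2 :=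
            Finset.sum_le_sum (fun j _ => by
              have := hU i j
              nlinarith [abs_nonneg (U i j), sq_abs (U i j)])
        _ = (k:ℝ) * δinf ^ 2 := by simp [Finset.sum_const]
    have hΔsum : ∑ j : Fin k, (Δ j) ^ 2 = ‖Δ‖ ^ 2 := by
      rw [← hdotΔ]; simp [dotProduct, sq]
    have hΔnn : (0:ℝ) ≤ ∑ j : Fin k, (Δ j) ^ 2 :=
      Finset.sum_nonneg (fun j _ => sq_nonneg _)
    have hmv : (U.mulVec Δ i) ^ 2 = (∑ j : Fin k, U i j * Δ j) ^ 2 := by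
      simp [Matrix.mulVec, dotProduct]
    rw [hmv, ← hΔsum]
    calc (∑ j : Fin k, U i j * Δ j) ^ 2
        ≤ (∑ j : Fin k, (U i j) ^ 2) * (∑ j : Fin k, (Δ j) ^ 2) := hcs
      _ ≤ ((k:ℝ) * δinf ^ 2) * (∑ j : Fin k, (Δ j) ^ 2) :=
          mul_le_mul_of_nonneg_right hU2 hΔnn
  have hUdot : (U.mulVec Δ) ⬝ᵥ (U.mulVec Δ) ≤ n * (((k:ℝ) * δinf ^ 2) * ‖Δ‖ ^ 2) := by
    calc (U.mulVec Δ) ⬝ᵥ (U.mulVec Δ) = ∑ i : Fin n, (U.mulVec Δ i) ^ 2 := by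
          simp [dotProduct, sq]
      _ ≤ ∑ _i : Fin n, ((k:ℝ) * δinf ^ 2) * ‖Δ‖ ^ 2 :=
          Finset.sum_le_sum (fun i _ => hUrow i)
      _ = n * (((k:ℝ) * δinf ^ 2) * ‖Δ‖ ^ 2) := by simp [Finset.sum_const]
  have hsum : ((Z + U).mulVec Δ) ⬝ᵥ ((Z + U).mulVec Δ)
      ≤ 2 * ((Z.mulVec Δ) ⬝ᵥ (Z.mulVec Δ)) + 2 * ((U.mulVec Δ) ⬝ᵥ (U.mulVec Δ)) := by
    rw [Matrix.add_mulVec]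
    simp only [dotProduct, Pi.add_apply, Finset.mul_sum, ← Finset.sum_add_distrib]
    apply Finset.sum_le_sum
    intro i _
    nlinarith [sq_nonneg (Z.mulVec Δ i - U.mulVec Δ i)]
  -- νmax is nonnegative
  have hν0 : (0:ℝ) ≤ νmax := by
    have i0 : Fin k := ⟨0, hk⟩
    set v : EuclideanSpace ℝ (Fin k) := EuclideanSpace.single i0 (1:ℝ) with hv
    have h := hν v
    rw [quad_eq] at h
    have hnv : ‖v‖ = 1 := by simp [hv]
    have hq : (0:ℝ) ≤ (Z.mulVec v) ⬝ᵥ (Z.mulVec v) :=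
      Finset.sum_nonneg (fun i _ => mul_self_nonneg _)
    have hq2 : (0:ℝ) ≤ (1 / (n:ℝ)) * ((Z.mulVec v) ⬝ᵥ (Z.mulVec v)) := by positivity
    rw [hnv] at h
    simp only [one_pow, mul_one] at h
    linarith
  -- conclusion
  rw [euc_norm_symm_sq]
  have hfac : (0:ℝ) ≤ νmax + (k:ℝ) * δinf ^ 2 := by positivity
  have hchain : ((Z + U).mulVec Δ) ⬝ᵥ ((Z + U).mulVec Δ)
      ≤ (n:ℝ) * (2 * (νmax + (k:ℝ) * δinf ^ 2) * ‖Δ‖ ^ 2) := by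
    have hring : (n:ℝ) * (2 * (νmax + (k:ℝ) * δinf ^ 2) * ‖Δ‖ ^ 2)
        = 2 * ((n:ℝ) * (νmax * ‖Δ‖ ^ 2)) + 2 * ((n:ℝ) * (((k:ℝ) * δinf ^ 2) * ‖Δ‖ ^ 2)) := by
      ring
    rw [hring]
    linarith
  calc (1 / (n:ℝ)) * (((Z + U).mulVec Δ) ⬝ᵥ ((Z + U).mulVec Δ))
      ≤ (1 / (n:ℝ)) * ((n:ℝ) * (2 * (νmax + (k:ℝ) * δinf ^ 2) * ‖Δ‖ ^ 2)) :=
        mul_le_mul_of_nonneg_left hchain (by positivity)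
    _ = 2 * (νmax + (k:ℝ) * δinf ^ 2) * ‖Δ‖ ^ 2 := by
        field_simp
    _ ≤ 2 * (νmax + (k:ℝ) * δinf ^ 2) * (4 / κ ^ 2 * E ^ 2) :=
        mul_le_mul_of_nonneg_left hΔsq (by positivity)
    _ = 2 * (νmax + (k:ℝ) * δinf ^ 2) * (4 / κ ^ 2) * E ^ 2 := by ring
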